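/- In the Jordan plane over a field of characteristic p > 2, for every t ∈ k one has (y + tx)^p = y^p + (t^p − t) x^p. -/
import Mathlib

open Finset Polynomial

section Aux16

lemma stmt16aux_zmod_roots (p : ℕ) [Fact p.Prime] :
    (X ^ p - X : (ZMod p)[X]).roots = Finset.univ.val := by
  have := FiniteField.roots_X_pow_card_sub_X (ZMod p)
  rwa [ZMod.card p] at this

lemma stmt16aux_zmod_prod (p : ℕ) [Fact p.Prime] :
    (Finset.univ.prod fun a : ZMod p => (X - C a)) = X ^ p - X := by
  have hm : (X ^ p - X : (ZMod p)[X]).Monic := by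
    apply Polynomial.monic_X_pow_sub
    simpa using (Fact.out : p.Prime).one_lt
  have h := Polynomial.prod_multiset_X_sub_C_of_monic_of_roots_card_eq hm ?_
  · rw [← h, stmt16aux_zmod_roots]
    rfl
  · rw [stmt16aux_zmod_roots, FiniteField.X_pow_card_sub_X_natDegree_eq _ (Fact.out : p.Prime).one_lt]
    simpa using (ZMod.card p).symm

lemma stmt16aux_prod_eval (p : ℕ) [Fact p.Prime] (K : Type*) [Field K] [CharP K p] (t : K) :
    (Finset.univ.prod fun a : ZMod p => (t - ZMod.castHom (dvd_refl p) K a)) = t ^ p - t := by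
  have h := congrArg (Polynomial.eval₂ (ZMod.castHom (dvd_refl p) K) t) (stmt16aux_zmod_prod p)
  simpa [Polynomial.eval₂_finset_prod] using h

lemma stmt16aux_range_to_zmod (p : ℕ) [Fact p.Prime] (K : Type*) [CommRing K] (f : ZMod p → K) :
    (Finset.range p).prod (fun i => f (i : ZMod p)) = Finset.univ.prod f := by
  haveI : NeZero p := ⟨(Fact.out : p.Prime).ne_zero⟩
  refine Finset.prod_nbij' (fun i => (i : ZMod p)) (fun a => a.val) ?_ ?_ ?_ ?_ ?_
  · intro i _; exact Finset.mem_univ _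
  · intro a _; exact Finset.mem_range.2 (ZMod.val_lt a)
  · intro i hi; exact ZMod.val_cast_of_lt (Finset.mem_range.1 hi)
  · intro a _; exact ZMod.natCast_zmod_val a
  · intro i _; rfl

lemma stmt16aux_prod_half (p : ℕ) [Fact p.Prime] (hp2 : 2 < p) (K : Type*) [Field K] [CharP K p]
    (t : K) :
    (Finset.range p).prod (fun i => (t - (i : K) * 2⁻¹)) = t ^ p - t := by
  have h2 : (2 : ZMod p) ≠ 0 := by
    intro h
    have h' : (p : ℕ) ∣ 2 := (ZMod.natCast_eq_zero_iff 2 p).1 (by exact_mod_cast h)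
    exact absurd (Nat.le_of_dvd two_pos h') (by omega)
  have key : ∀ i : ℕ, t - (i : K) * 2⁻¹
      = t - ZMod.castHom (dvd_refl p) K ((i : ZMod p) * (2 : ZMod p)⁻¹) := by
    intro i
    rw [map_mul, map_inv₀, map_natCast, map_ofNat]
  calc (Finset.range p).prod (fun i => (t - (i : K) * 2⁻¹))
      = (Finset.range p).prod (fun i =>
          (fun a : ZMod p => t - ZMod.castHom (dvd_refl p) K (a * (2 : ZMod p)⁻¹)) (i : ZMod p)) := by
        refine Finset.prod_congr rfl fun i _ => key i
    _ = Finset.univ.prod (fun a : ZMod p => t - ZMod.castHom (dvd_refl p) K (a * (2 : ZMod p)⁻¹)) :=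
        stmt16aux_range_to_zmod p K (fun a => t - ZMod.castHom (dvd_refl p) K (a * (2 : ZMod p)⁻¹))
    _ = Finset.univ.prod (fun a : ZMod p => t - ZMod.castHom (dvd_refl p) K a) := by
        refine Fintype.prod_bijective (fun a => a * (2 : ZMod p)⁻¹)
          (Equiv.mulRight₀ (2 : ZMod p)⁻¹ (inv_ne_zero h2)).bijective _ _ (fun a => rfl)
    _ = t ^ p - t := stmt16aux_prod_eval p K t

variable {K : Type*} [Field K] {A : Type*} [Ring A] [Algebra K A] (x y : A) (t : K)

lemma stmt16aux_comm_pow (hrel : y * x = x * y - (1/2 : K) • x ^ 2) (n : ℕ) :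
    y * x ^ n = x ^ n * y - ((n : K) * 2⁻¹) • x ^ (n + 1) := by
  induction n with
  | zero => simp
  | succ n ih =>
    have h : y * x ^ (n+1) = (y * x ^ n) * x := by rw [mul_assoc, ← pow_succ]
    rw [h, ih, sub_mul, smul_mul_assoc, ← pow_succ, mul_assoc, hrel, mul_sub,
      mul_smul_comm, ← mul_assoc, ← pow_succ, ← pow_add, sub_sub, ← add_smul]
    norm_num
    congr 1
    ring

lemma stmt16aux_zmul (hrel : y * x = x * y - (1/2 : K) • x ^ 2) (j m : ℕ) :
    (y + t • x) * (x ^ j * y ^ m)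
    = x ^ j * y ^ (m + 1) + (t - (j : K) * 2⁻¹) • (x ^ (j + 1) * y ^ m) := by
  rw [add_mul, smul_mul_assoc, ← mul_assoc, stmt16aux_comm_pow x y hrel, sub_mul, smul_mul_assoc,
    mul_assoc, ← pow_succ', ← mul_assoc x, ← pow_succ', sub_smul]
  abel

lemma stmt16aux_expand (hrel : y * x = x * y - (1/2 : K) • x ^ 2) (n : ℕ) :
    (y + t • x) ^ n = ∑ j ∈ range (n + 1),
      ((n.choose j : K) * ∏ i ∈ range j, (t - (i : K) * 2⁻¹)) • (x ^ j * y ^ (n - j)) := by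
  set B : ℕ → K := fun j => ∏ i ∈ range j, (t - (i : K) * 2⁻¹) with hB
  have hBsucc : ∀ j, B (j + 1) = B j * (t - (j : K) * 2⁻¹) := fun j => prod_range_succ _ _
  induction n with
  | zero => simp [hB]
  | succ n ih =>
    set f1 : ℕ → A := fun j => ((n.choose j : K) * B j) • (x ^ j * y ^ (n - j + 1)) with hf1
    set f2 : ℕ → A := fun j => ((n.choose j : K) * B (j+1)) • (x ^ (j+1) * y ^ (n - j)) with hf2
    set h : ℕ → A := fun j => ((n.choose (j+1) : K) * B (j+1)) • (x ^ (j+1) * y ^ (n - j)) with hh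
    set g : ℕ → A := fun j => (((n+1).choose j : K) * B j) • (x ^ j * y ^ (n + 1 - j)) with hg
    have lhs_eq : (y + t • x) ^ (n + 1)
        = ∑ j ∈ range (n + 1), f1 j + ∑ j ∈ range (n + 1), f2 j := by
      rw [pow_succ', ih, Finset.mul_sum, ← Finset.sum_add_distrib]
      refine Finset.sum_congr rfl fun j hj => ?_
      rw [mul_smul_comm, stmt16aux_zmul x y t hrel, smul_add, smul_smul]
      simp only [hf1, hf2, hB, prod_range_succ, mul_assoc]
    have hf1_sum : ∑ j ∈ range (n + 1), f1 j = ∑ j ∈ range (n + 1), h j + g 0 := by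
      rw [Finset.sum_range_succ' f1 n, Finset.sum_range_succ h n]
      have hhn : h n = 0 := by simp [hh]
      have hf10 : f1 0 = g 0 := by simp [hf1, hg]
      rw [hhn, add_zero, hf10]
      congr 1
      refine Finset.sum_congr rfl fun j hj => ?_
      have e2 : n - (j + 1) + 1 = n - j := by have := Finset.mem_range.1 hj; omega
      simp only [hf1, hh]
      rw [e2]
    have rhs_eq : ∑ j ∈ range (n + 2), g j
        = ∑ j ∈ range (n + 1), f2 j + ∑ j ∈ range (n + 1), h j + g 0 := by
      rw [Finset.sum_range_succ' g (n+1)]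
      congr 1
      rw [← Finset.sum_add_distrib]
      refine Finset.sum_congr rfl fun j hj => ?_
      have e : n + 1 - (j + 1) = n - j := by omega
      simp only [hg, hf2, hh]
      rw [e, Nat.choose_succ_succ, ← add_smul]
      congr 1
      push_cast
      ring
    rw [lhs_eq, hf1_sum, rhs_eq]
    abel

end Aux16

/-- In the Jordan plane over a field of characteristic `p > 2` (universally: in any
algebra with elements `x, y` satisfying `yx = xy - (1/2)x²`), for every `t ∈ k` one has
`(y + tx)^p = y^p + (t^p - t) x^p`. -/
theorem stmt16 (p : ℕ) [Fact p.Prime] (hp2 : 2 < p) (K : Type*) [Field K] [CharP K p]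
    (A : Type*) [Ring A] [Algebra K A] (x y : A)
    (hrel : y * x = x * y - (1/2 : K) • x ^ 2) (t : K) :
    (y + t • x) ^ p = y ^ p + (t ^ p - t) • x ^ p := by
  rw [stmt16aux_expand x y t hrel p, Finset.sum_range_succ]
  have hmid : ∑ j ∈ Finset.range p,
      ((p.choose j : K) * ∏ i ∈ Finset.range j, (t - (i : K) * 2⁻¹)) • (x ^ j * y ^ (p - j))
      = y ^ p := by
    rw [Finset.sum_eq_single_of_mem 0 (Finset.mem_range.2 (by omega))]
    · simp
    · intro j hj hj0
      have hdvd : p ∣ p.choose j := (Fact.out : p.Prime).dvd_choose_self hj0 (Finset.mem_range.1 hj)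
      have : (p.choose j : K) = 0 := (CharP.cast_eq_zero_iff K p _).2 hdvd
      rw [this, zero_mul, zero_smul]
  rw [hmid]
  congr 1
  rw [Nat.choose_self, Nat.cast_one, one_mul, Nat.sub_self, pow_zero, mul_one,
    stmt16aux_prod_half p hp2 K t]
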